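/- Fix t > 0 and define for n ≥ 1 the function φ_{n,t} ∈ L²(ℝ) by φ_{n,t}(s) = e^{−(t/2+s)} Σ_{k=1}^n (χ_{[−tk/(2n), −tk/(2n)+t/(4n)]}(s) − χ_{[−tk/(2n)+t/(4n), −t(k−1)/(2n)]}(s)). Then: (i) ‖φ_{n,t}‖² = (1 − e^{−t})/2 for every n ≥ 1 (in particular the norm is strictly positive and independent of n); (ii) φ_{n,t} converges weakly to 0 in L²(ℝ) as n → ∞, i.e. ⟨f, φ_{n,t}⟩ → 0 for every f ∈ L²(ℝ); hence (iii) the sequence (φ_{n,t})_n does not converge in the norm of L²(ℝ). -/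

import Mathlib

noncomputable section

open MeasureTheory Filter Finset

/-- The one-photon wave function `φ_{n,t}` produced after `n` Pauli decoupling cycles of total
duration `t` in the qubit coupled to the singular Friedrichs–Lee model. -/
def phiFL (t : ℝ) (n : ℕ) (s : ℝ) : ℂ :=
  ((Real.exp (-(t / 2 + s)) *
      ∑ k ∈ Finset.Icc 1 n,
        ((Set.Icc (-(t * k) / (2 * n)) (-(t * k) / (2 * n) + t / (4 * n))).indicator
            (1 : ℝ → ℝ) s -
          (Set.Icc (-(t * k) / (2 * n) + t / (4 * n)) (-(t * ((k : ℝ) - 1)) / (2 * n))).indicator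
            (1 : ℝ → ℝ) s) : ℝ) : ℂ)

open scoped ENNReal

namespace FLaux

/-- endpoint grid -/
def eF (t : ℝ) (n : ℕ) (x : ℝ) : ℝ := -(t * x) / (4 * n)

variable {t : ℝ} {n : ℕ}

lemma eF_lt (ht : 0 < t) (hn : 1 ≤ n) {x y : ℝ} (h : x < y) : eF t n y < eF t n x := by
  have hn' : (0:ℝ) < 4 * n := by positivity
  rw [eF, eF, div_lt_div_iff₀ hn' hn']
  nlinarith [mul_lt_mul_of_pos_right (mul_lt_mul_of_pos_left h ht) hn']

lemma eF_le (ht : 0 < t) (hn : 1 ≤ n) {x y : ℝ} (h : x ≤ y) : eF t n y ≤ eF t n x := by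
  rcases eq_or_lt_of_le h with rfl | h
  · exact le_rfl
  · exact (eF_lt ht hn h).le

lemma eF_zero : eF t n 0 = 0 := by simp [eF]

lemma eF_two_n (hn : 1 ≤ n) : eF t n (2 * n) = -(t / 2) := by
  have hn' : (n:ℝ) ≠ 0 := Nat.cast_ne_zero.2 (by omega)
  rw [eF]; field_simp; ring

lemma eF_add (hn : 1 ≤ n) (x : ℝ) : eF t n x + t / (4 * n) = eF t n (x - 1) := by
  have hn' : (n:ℝ) ≠ 0 := Nat.cast_ne_zero.2 (by omega)
  rw [eF, eF]; field_simp; ring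

lemma ep1 (hn : 1 ≤ n) (k : ℕ) : -(t * k) / (2 * n) = eF t n (2 * k) := by
  have hn' : (n:ℝ) ≠ 0 := Nat.cast_ne_zero.2 (by omega)
  rw [eF]; field_simp; ring

lemma ep2 (hn : 1 ≤ n) (k : ℕ) : -(t * k) / (2 * n) + t / (4 * n) = eF t n (2 * k - 1) := by
  have hn' : (n:ℝ) ≠ 0 := Nat.cast_ne_zero.2 (by omega)
  rw [eF]; field_simp; ring

lemma ep3 (hn : 1 ≤ n) (k : ℕ) : -(t * ((k:ℝ) - 1)) / (2 * n) = eF t n (2 * k - 2) := by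
  have hn' : (n:ℝ) ≠ 0 := Nat.cast_ne_zero.2 (by omega)
  rw [eF]; field_simp; ring

/-- the sign function -/
def RF (t : ℝ) (n : ℕ) (s : ℝ) : ℝ :=
  ∑ k ∈ Finset.Icc 1 n,
    ((Set.Icc (eF t n (2 * k)) (eF t n (2 * k - 1))).indicator (1 : ℝ → ℝ) s -
      (Set.Icc (eF t n (2 * k - 1)) (eF t n (2 * k - 2))).indicator (1 : ℝ → ℝ) s)

lemma phi_eq (hn : 1 ≤ n) (s : ℝ) :
    phiFL t n s = ((Real.exp (-(t / 2 + s)) * RF t n s : ℝ) : ℂ) := by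
  rw [phiFL, RF]
  congr 2
  refine Finset.sum_congr rfl fun k _ => ?_
  rw [ep1 hn, eF_add hn, ep3 hn]

lemma RF_eq_zero_of_not_mem (ht : 0 < t) (hn : 1 ≤ n) {s : ℝ}
    (h : s < -(t / 2) ∨ 0 < s) : RF t n s = 0 := by
  rw [RF]
  refine Finset.sum_eq_zero fun k hk => ?_
  obtain ⟨hk1, hk2⟩ := Finset.mem_Icc.1 hk
  have hk2' : (2:ℝ) * k ≤ 2 * n := by
    have := (Nat.cast_le (α := ℝ)).2 hk2; nlinarith
  have hk1' : (1:ℝ) ≤ (k:ℝ) := by exact_mod_cast hk1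
  have hA : s ∉ Set.Icc (eF t n (2 * k)) (eF t n (2 * k - 1)) := by
    rintro ⟨h1, h2⟩
    rcases h with h | h
    · have h3 := eF_le ht hn hk2'
      rw [eF_two_n hn] at h3; linarith
    · have h3 : eF t n (2 * k - 1) ≤ eF t n 0 := eF_le ht hn (by linarith)
      rw [eF_zero] at h3; linarith
  have hB : s ∉ Set.Icc (eF t n (2 * k - 1)) (eF t n (2 * k - 2)) := by
    rintro ⟨h1, h2⟩
    rcases h with h | h
    · have h3 : eF t n (2 * (n:ℝ)) ≤ eF t n (2 * k - 1) := eF_le ht hn (by linarith)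
      rw [eF_two_n hn] at h3; linarith
    · have h3 : eF t n (2 * k - 2) ≤ eF t n 0 := eF_le ht hn (by linarith)
      rw [eF_zero] at h3; linarith
  rw [Set.indicator_of_notMem hA, Set.indicator_of_notMem hB, sub_zero]

lemma term_eq_zero (ht : 0 < t) (hn : 1 ≤ n) {s : ℝ} {k k' : ℕ} (hk' : k' ∈ Finset.Icc 1 n)
    (hne : k' ≠ k) (hk1 : 1 ≤ k)
    (hlow : eF t n (2 * k) < s) (hhigh : s < eF t n (2 * (k:ℝ) - 2)) :
    (Set.Icc (eF t n (2 * k')) (eF t n (2 * k' - 1))).indicator (1 : ℝ → ℝ) s -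
      (Set.Icc (eF t n (2 * k' - 1)) (eF t n (2 * k' - 2))).indicator (1 : ℝ → ℝ) s = 0 := by
  obtain ⟨hk'1, hk'2⟩ := Finset.mem_Icc.1 hk'
  rcases lt_or_gt_of_ne hne with hlt | hgt
  · -- k' < k : lower endpoints are above s
    have hc : ((k' + 1 : ℕ) : ℝ) ≤ (k : ℝ) := Nat.cast_le.2 hlt
    push_cast at hc
    have h1 : s < eF t n (2 * k') := lt_of_lt_of_le hhigh (eF_le ht hn (by linarith))
    have h2 : s < eF t n (2 * k' - 1) := lt_of_lt_of_le hhigh (eF_le ht hn (by linarith))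
    rw [Set.indicator_of_notMem (fun hm => absurd hm.1 (not_le.2 h1)),
      Set.indicator_of_notMem (fun hm => absurd hm.1 (not_le.2 h2)), sub_zero]
  · -- k < k' : upper endpoints are below s
    have hc : ((k + 1 : ℕ) : ℝ) ≤ (k' : ℝ) := Nat.cast_le.2 hgt
    push_cast at hc
    have h1 : eF t n (2 * k' - 1) < s := lt_of_le_of_lt (eF_le ht hn (by linarith)) hlow
    have h2 : eF t n (2 * k' - 2) < s := lt_of_le_of_lt (eF_le ht hn (by linarith)) hlow
    rw [Set.indicator_of_notMem (fun hm => absurd hm.2 (not_le.2 h1)),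
      Set.indicator_of_notMem (fun hm => absurd hm.2 (not_le.2 h2)), sub_zero]

lemma RF_sq (ht : 0 < t) (hn : 1 ≤ n) {s : ℝ} (hs : ∀ j : ℤ, s ≠ eF t n j) :
    (RF t n s) ^ 2 = (Set.Ioo (-(t / 2)) 0).indicator (1 : ℝ → ℝ) s := by
  have hn0 : (0:ℝ) < (n:ℝ) := by exact_mod_cast Nat.pos_of_ne_zero (by omega)
  by_cases hmem : s ∈ Set.Ioo (-(t / 2)) 0
  · rw [Set.indicator_of_mem hmem, Pi.one_apply]
    obtain ⟨hs1, hs2⟩ := Set.mem_Ioo.1 hmem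
    set x : ℝ := -(4 * n) * s / t with hxdef
    have hsx : s = eF t n x := by
      rw [eF, hxdef]; field_simp
    have hx0 : 0 < x := by
      rw [hxdef]; exact div_pos (by nlinarith) ht
    have hx2n : x < 2 * n := by
      rw [hxdef, div_lt_iff₀ ht]; nlinarith
    set j : ℤ := ⌊x⌋ with hjdef
    have hjx : (j : ℝ) ≤ x := Int.floor_le x
    have hxj : x < (j : ℝ) + 1 := Int.lt_floor_add_one x
    have hne : (j : ℝ) ≠ x := fun h => hs j (by rw [hsx, ← h])
    have hjx' : (j : ℝ) < x := lt_of_le_of_ne hjx hne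
    have hj0 : 0 ≤ j := Int.floor_nonneg.2 hx0.le
    have hj2n : (j : ℝ) < 2 * n := lt_of_le_of_lt hjx hx2n
    have hs_lt : s < eF t n j := by rw [hsx]; exact eF_lt ht hn hjx'
    have hs_gt : eF t n ((j : ℝ) + 1) < s := by
      rw [hsx]; exact eF_lt ht hn hxj
    rcases Int.even_or_odd j with ⟨m, hm⟩ | ⟨m, hm⟩
    · -- j = 2m even : s is in the interior of the minus-half of block k = m+1
      set k : ℕ := m.toNat + 1 with hkdef
      have hm0 : 0 ≤ m := by omega
      have hk' : (k : ℤ) = m + 1 := by omega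
      have hkr : (k : ℝ) = (m : ℝ) + 1 := by exact_mod_cast congrArg (Int.cast : ℤ → ℝ) hk'
      have hjr : (j : ℝ) = 2 * (k : ℝ) - 2 := by
        have : (j : ℝ) = (m : ℝ) + (m : ℝ) := by exact_mod_cast congrArg (Int.cast : ℤ → ℝ) hm
        rw [this, hkr]; ring
      have hkn : k ≤ n := by
        have : (2 : ℝ) * (k : ℝ) - 2 < 2 * n := by rw [← hjr]; exact hj2n
        have : (k : ℝ) < (n : ℝ) + 1 := by linarith
        exact_mod_cast Nat.lt_add_one_iff.1 (by exact_mod_cast this)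
      have hBlo : eF t n (2 * (k : ℝ) - 1) < s := by
        have : (j : ℝ) + 1 = 2 * (k : ℝ) - 1 := by rw [hjr]; ring
        rw [← this]; exact hs_gt
      have hBhi : s < eF t n (2 * (k : ℝ) - 2) := by rw [← hjr]; exact hs_lt
      have hlow : eF t n (2 * (k : ℝ)) < s :=
        lt_trans (eF_lt ht hn (by linarith)) hBlo
      have hsum : RF t n s = -1 := by
        rw [RF, Finset.sum_eq_single_of_mem k (Finset.mem_Icc.2 ⟨by omega, hkn⟩)
          (fun k' hk' hne' => term_eq_zero ht hn hk' hne' (by omega) hlow hBhi)]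
        rw [Set.indicator_of_notMem (fun hm' => absurd hm'.2 (not_le.2 hBlo)),
          Set.indicator_of_mem (Set.mem_Icc.2 ⟨hBlo.le, hBhi.le⟩), Pi.one_apply]
        ring
      rw [hsum]; ring
    · -- j = 2m+1 odd : s is in the interior of the plus-half of block k = m+1
      set k : ℕ := m.toNat + 1 with hkdef
      have hm0 : 0 ≤ m := by omega
      have hk' : (k : ℤ) = m + 1 := by omega
      have hkr : (k : ℝ) = (m : ℝ) + 1 := by exact_mod_cast congrArg (Int.cast : ℤ → ℝ) hk'
      have hjr : (j : ℝ) = 2 * (k : ℝ) - 1 := by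
        have : (j : ℝ) = 2 * (m : ℝ) + 1 := by exact_mod_cast congrArg (Int.cast : ℤ → ℝ) hm
        rw [this, hkr]; ring
      have hkn : k ≤ n := by
        have : (2 : ℝ) * (k : ℝ) - 1 < 2 * n := by rw [← hjr]; exact hj2n
        have : (k : ℝ) < (n : ℝ) + 1 := by linarith
        exact_mod_cast Nat.lt_add_one_iff.1 (by exact_mod_cast this)
      have hAlo : eF t n (2 * (k : ℝ)) < s := by
        have : (j : ℝ) + 1 = 2 * (k : ℝ) := by rw [hjr]; ring
        rw [← this]; exact hs_gt
      have hAhi : s < eF t n (2 * (k : ℝ) - 1) := by rw [← hjr]; exact hs_lt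
      have hhigh : s < eF t n (2 * (k : ℝ) - 2) :=
        lt_trans hAhi (eF_lt ht hn (by linarith))
      have hsum : RF t n s = 1 := by
        rw [RF, Finset.sum_eq_single_of_mem k (Finset.mem_Icc.2 ⟨by omega, hkn⟩)
          (fun k' hk' hne' => term_eq_zero ht hn hk' hne' (by omega) hAlo hhigh)]
        rw [Set.indicator_of_mem (Set.mem_Icc.2 ⟨hAlo.le, hAhi.le⟩),
          Set.indicator_of_notMem (fun hm' => absurd hm'.1 (not_le.2 hAhi)), Pi.one_apply]
        ring
      rw [hsum]; ring
  · rw [Set.indicator_of_notMem hmem]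
    have h1 : s ≠ -(t / 2) := by
      intro h
      exact hs (2 * n) (by rw [h, ← eF_two_n (t := t) hn]; push_cast; ring_nf)
    have h2 : s ≠ 0 := by
      intro h
      exact hs 0 (by rw [h, ← eF_zero (t := t) (n := n)]; norm_num)
    have : s < -(t / 2) ∨ 0 < s := by
      rcases lt_or_ge s (-(t / 2)) with h | h
      · exact Or.inl h
      rcases lt_or_ge 0 s with h' | h'
      · exact Or.inr h'
      exact absurd (Set.mem_Ioo.2 ⟨lt_of_le_of_ne h (Ne.symm h1), lt_of_le_of_ne h' h2⟩) hmem
    rw [RF_eq_zero_of_not_mem ht hn this]; ring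

lemma phi_meas (t : ℝ) (n : ℕ) : Measurable (phiFL t n) := by
  apply Complex.measurable_ofReal.comp
  apply Measurable.mul
  · exact (Real.continuous_exp.comp (by continuity)).measurable
  · exact Finset.measurable_sum _ fun k _ =>
      ((measurable_one.indicator measurableSet_Icc).sub
        (measurable_one.indicator measurableSet_Icc))

lemma phi_ae (ht : 0 < t) (hn : 1 ≤ n) :
    (fun s => ‖phiFL t n s‖ ^ 2) =ᵐ[(volume : Measure ℝ)]
      (Set.Ioo (-(t / 2)) 0).indicator (fun s => Real.exp (-(t + 2 * s))) := by
  have hE : (volume : Measure ℝ) (Set.range fun j : ℤ => eF t n j) = 0 :=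
    (Set.countable_range _).measure_zero _
  filter_upwards [compl_mem_ae_iff.2 hE] with s hsE
  have hs : ∀ j : ℤ, s ≠ eF t n j := by
    intro j h
    exact hsE ⟨j, h.symm⟩
  rw [phi_eq hn s, Complex.norm_real, Real.norm_eq_abs, sq_abs, mul_pow,
    RF_sq ht hn hs, pow_two, ← Real.exp_add]
  have hexp : -(t / 2 + s) + -(t / 2 + s) = -(t + 2 * s) := by ring
  by_cases hmem : s ∈ Set.Ioo (-(t / 2)) 0
  · rw [Set.indicator_of_mem hmem, Set.indicator_of_mem hmem, Pi.one_apply, hexp, mul_one]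
  · rw [Set.indicator_of_notMem hmem, Set.indicator_of_notMem hmem, mul_zero]

lemma phi_bound (ht : 0 < t) (hn : 1 ≤ n) (s : ℝ) :
    ‖phiFL t n s‖ ≤ (Set.Icc (-(t / 2)) 0).indicator (fun _ => (n : ℝ)) s := by
  rw [phi_eq hn s, Complex.norm_real, Real.norm_eq_abs, abs_mul,
    Real.abs_exp]
  by_cases hmem : s ∈ Set.Icc (-(t / 2)) 0
  · rw [Set.indicator_of_mem hmem]
    obtain ⟨hs1, hs2⟩ := Set.mem_Icc.1 hmem
    have h1 : Real.exp (-(t / 2 + s)) ≤ 1 := Real.exp_le_one_iff.2 (by linarith)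
    have h2 : |RF t n s| ≤ (n : ℝ) := by
      rw [RF]
      refine (Finset.abs_sum_le_sum_abs _ _).trans ?_
      have : ∀ k ∈ Finset.Icc 1 n,
          |(Set.Icc (eF t n (2 * k)) (eF t n (2 * k - 1))).indicator (1 : ℝ → ℝ) s -
            (Set.Icc (eF t n (2 * k - 1)) (eF t n (2 * k - 2))).indicator (1 : ℝ → ℝ) s| ≤ 1 := by
        intro k _
        by_cases hA : s ∈ Set.Icc (eF t n (2 * k)) (eF t n (2 * k - 1)) <;>
          by_cases hB : s ∈ Set.Icc (eF t n (2 * k - 1)) (eF t n (2 * k - 2)) <;>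
          simp [Set.indicator_apply, hA, hB]
      refine (Finset.sum_le_sum this).trans ?_
      simp [Nat.card_Icc]
    calc Real.exp (-(t / 2 + s)) * |RF t n s| ≤ 1 * (n : ℝ) :=
          mul_le_mul h1 h2 (abs_nonneg _) zero_le_one
      _ = (n : ℝ) := one_mul _
  · rw [Set.indicator_of_notMem hmem]
    have : RF t n s = 0 := by
      apply RF_eq_zero_of_not_mem ht hn
      rcases lt_or_ge s (-(t / 2)) with h | h
      · exact Or.inl h
      rcases lt_or_ge 0 s with h' | h'
      · exact Or.inr h'
      exact absurd (Set.mem_Icc.2 ⟨h, h'⟩) hmem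
    rw [this, abs_zero, mul_zero]

lemma phi_memℒp (ht : 0 < t) (n : ℕ) : MemLp (phiFL t n) 2 (volume : Measure ℝ) := by
  rcases Nat.eq_zero_or_pos n with rfl | hn
  · have : phiFL t 0 = fun _ => (0 : ℂ) := by
      funext s
      simp [phiFL]
    rw [this]
    exact MemLp.zero
  · refine MemLp.of_le
      (memLp_indicator_const (s := Set.Icc (-(t / 2)) 0) 2 measurableSet_Icc ((n : ℝ))
        (Or.inr (measure_Icc_lt_top).ne))
      (phi_meas t n).aestronglyMeasurable (ae_of_all _ fun s => ?_)
    refine (phi_bound ht hn s).trans ?_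
    rw [Real.norm_eq_abs]
    exact le_abs_self _

lemma integral_exp_part (ht : 0 < t) :
    (∫ s : ℝ, (Set.Ioo (-(t / 2)) 0).indicator (fun s => Real.exp (-(t + 2 * s))) s)
      = (1 - Real.exp (-t)) / 2 := by
  rw [MeasureTheory.integral_indicator measurableSet_Ioo,
    ← MeasureTheory.integral_Ioc_eq_integral_Ioo,
    ← intervalIntegral.integral_of_le (by linarith : -(t / 2) ≤ (0:ℝ))]
  have hderiv : ∀ x ∈ Set.uIcc (-(t / 2)) (0:ℝ),
      HasDerivAt (fun y => -(Real.exp (-(t + 2 * y)) / 2)) (Real.exp (-(t + 2 * x))) x := by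
    intro x _
    have h1 : HasDerivAt (fun y : ℝ => -(t + 2 * y)) (-2) x := by
      have h := (((hasDerivAt_id x).const_mul (2:ℝ)).const_add t).neg
      simp only [mul_one] at h
      exact h
    have h2 := h1.exp
    have h3 : HasDerivAt (fun y => -(Real.exp (-(t + 2 * y)) / 2))
        (-(Real.exp (-(t + 2 * x)) * -2 / 2)) x := (h2.div_const 2).neg
    convert h3 using 1
    ring
  rw [intervalIntegral.integral_eq_sub_of_hasDerivAt hderiv
    ((Real.continuous_exp.comp (by continuity)).intervalIntegrable _ _)]
  have e1 : -(t + 2 * (0:ℝ)) = -t := by ring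
  have e2 : -(t + 2 * (-(t / 2))) = 0 := by ring
  rw [e1, e2, Real.exp_zero]
  ring

lemma part_i (ht : 0 < t) (hn : 1 ≤ n) :
    (∫ s : ℝ, ‖phiFL t n s‖ ^ 2) = (1 - Real.exp (-t)) / 2 := by
  rw [integral_congr_ae (phi_ae ht hn), integral_exp_part ht]

lemma tendsto_cont (ht : 0 < t) {g : ℝ → ℂ} (hgc : Continuous g) (hgs : HasCompactSupport g) :
    Tendsto (fun n : ℕ => ∫ s : ℝ, (starRingEnd ℂ) (g s) * phiFL t n s) atTop (nhds 0) := by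
  set ψ : ℝ → ℂ := fun s => (starRingEnd ℂ) (g s) * ((Real.exp (-(t / 2 + s)) : ℝ) : ℂ)
    with hψdef
  have hψc : Continuous ψ := (continuous_star.comp hgc).mul
    (Complex.continuous_ofReal.comp (Real.continuous_exp.comp (by continuity)))
  have hψs : HasCompactSupport ψ := (hgs.comp_left (by simp)).mul_right
  have hψi : Integrable ψ := hψc.integrable_of_hasCompactSupport hψs
  have hψu : UniformContinuous ψ := hψs.uniformContinuous_of_continuous hψc
  rw [Metric.tendsto_atTop]
  intro ε hε
  have hden : (0:ℝ) < t / 4 + 1 := by linarith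
  set ε' : ℝ := ε / (t / 4 + 1) with hε'def
  have hε' : 0 < ε' := div_pos hε hden
  obtain ⟨δ₀, hδ₀, hδ₀'⟩ := Metric.uniformContinuous_iff.1 hψu ε' hε'
  obtain ⟨N₀, hN₀⟩ := exists_nat_gt (t / (4 * δ₀))
  refine ⟨max N₀ 1, fun n hn' => ?_⟩
  have hn : 1 ≤ n := le_trans (le_max_right _ _) hn'
  have hn0 : (0:ℝ) < n := by exact_mod_cast Nat.pos_of_ne_zero (by omega)
  have hnN : (N₀ : ℝ) ≤ n := Nat.cast_le.2 (le_trans (le_max_left _ _) hn')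
  set δ : ℝ := t / (4 * n) with hδdef
  have hδpos : 0 < δ := by rw [hδdef]; positivity
  have hδlt : δ < δ₀ := by
    rw [hδdef, div_lt_iff₀ (by positivity)]
    have h4 : t / (4 * δ₀) < (n:ℝ) := lt_of_lt_of_le hN₀ hnN
    rw [div_lt_iff₀ (by positivity)] at h4
    nlinarith
  -- pointwise decomposition of the integrand
  have hpt : ∀ s : ℝ, (starRingEnd ℂ) (g s) * phiFL t n s =
      ∑ k ∈ Finset.Icc 1 n,
        ((Set.Icc (eF t n (2 * k)) (eF t n (2 * k - 1))).indicator ψ s -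
          (Set.Icc (eF t n (2 * k - 1)) (eF t n (2 * k - 2))).indicator ψ s) := by
    intro s
    rw [phi_eq hn s, RF, Complex.ofReal_mul, Complex.ofReal_sum, Finset.mul_sum,
      Finset.mul_sum]
    refine Finset.sum_congr rfl fun k _ => ?_
    by_cases hA : s ∈ Set.Icc (eF t n (2 * k)) (eF t n (2 * k - 1)) <;>
      by_cases hB : s ∈ Set.Icc (eF t n (2 * k - 1)) (eF t n (2 * k - 2)) <;>
      simp [Set.indicator_apply, hA, hB, hψdef] <;> ring
  have hintA : ∀ k : ℕ,
      Integrable ((Set.Icc (eF t n (2 * k)) (eF t n (2 * k - 1))).indicator ψ) :=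
    fun k => hψi.indicator measurableSet_Icc
  have hintB : ∀ k : ℕ,
      Integrable ((Set.Icc (eF t n (2 * k - 1)) (eF t n (2 * k - 2))).indicator ψ) :=
    fun k => hψi.indicator measurableSet_Icc
  have hψδc : Continuous (fun y : ℝ => ψ (y + δ)) := hψc.comp (by continuity)
  have hψδs : HasCompactSupport (fun y : ℝ => ψ (y + δ)) :=
    hψs.comp_homeomorph (Homeomorph.addRight δ)
  have hψδi : Integrable (fun y : ℝ => ψ (y + δ)) :=
    hψδc.integrable_of_hasCompactSupport hψδs
  have hIeq : (∫ s : ℝ, (starRingEnd ℂ) (g s) * phiFL t n s) =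
      ∑ k ∈ Finset.Icc 1 n,
        ((∫ s : ℝ, (Set.Icc (eF t n (2 * k)) (eF t n (2 * k - 1))).indicator ψ s) -
          ∫ s : ℝ, (Set.Icc (eF t n (2 * k - 1)) (eF t n (2 * k - 2))).indicator ψ s) := by
    have hsum := MeasureTheory.integral_finset_sum (μ := volume) (Finset.Icc 1 n)
      (f := fun (k : ℕ) (s : ℝ) =>
        (Set.Icc (eF t n (2 * k)) (eF t n (2 * k - 1))).indicator ψ s -
          (Set.Icc (eF t n (2 * k - 1)) (eF t n (2 * k - 2))).indicator ψ s)
      (fun k _ => (hintA k).sub (hintB k))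
    rw [integral_congr_ae (ae_of_all _ hpt), hsum]
    exact Finset.sum_congr rfl fun k _ => integral_sub (hintA k) (hintB k)
  have htrans : ∀ k : ℕ,
      (∫ s : ℝ, (Set.Icc (eF t n (2 * k - 1)) (eF t n (2 * k - 2))).indicator ψ s) =
        ∫ s : ℝ, (Set.Icc (eF t n (2 * k)) (eF t n (2 * k - 1))).indicator
          (fun y => ψ (y + δ)) s := by
    intro k
    have he1 : eF t n (2 * (k:ℝ)) + δ = eF t n (2 * k - 1) := by
      rw [hδdef]; exact eF_add hn _
    have he2 : eF t n (2 * (k:ℝ) - 1) + δ = eF t n (2 * k - 2) := by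
      rw [hδdef]
      have h := eF_add (t := t) hn (2 * (k:ℝ) - 1)
      rw [h]
      congr 1; ring
    have h0 : ∀ x : ℝ,
        (Set.Icc (eF t n (2 * k - 1)) (eF t n (2 * k - 2))).indicator ψ (x + δ) =
          (Set.Icc (eF t n (2 * k)) (eF t n (2 * k - 1))).indicator
            (fun y => ψ (y + δ)) x := by
      intro x
      by_cases hx : x ∈ Set.Icc (eF t n (2 * (k:ℝ))) (eF t n (2 * k - 1))
      · obtain ⟨hx1, hx2⟩ := Set.mem_Icc.1 hx
        rw [Set.indicator_of_mem hx, Set.indicator_of_mem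
          (Set.mem_Icc.2 ⟨by linarith, by linarith⟩)]
      · rw [Set.indicator_of_notMem hx, Set.indicator_of_notMem ?_]
        intro hmem
        obtain ⟨h1, h2⟩ := Set.mem_Icc.1 hmem
        exact hx (Set.mem_Icc.2 ⟨by linarith, by linarith⟩)
    rw [← integral_add_right_eq_self
      ((Set.Icc (eF t n (2 * k - 1)) (eF t n (2 * k - 2))).indicator ψ) δ]
    exact integral_congr_ae (ae_of_all _ h0)
  have hdiff : ∀ k : ℕ,
      ((∫ s : ℝ, (Set.Icc (eF t n (2 * k)) (eF t n (2 * k - 1))).indicator ψ s) -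
        ∫ s : ℝ, (Set.Icc (eF t n (2 * k - 1)) (eF t n (2 * k - 2))).indicator ψ s) =
      ∫ s in Set.Icc (eF t n (2 * k)) (eF t n (2 * k - 1)), (ψ s - ψ (s + δ)) := by
    intro k
    rw [htrans k, MeasureTheory.integral_indicator measurableSet_Icc,
      MeasureTheory.integral_indicator measurableSet_Icc,
      ← integral_sub hψi.integrableOn hψδi.integrableOn]
  have hbnd : ∀ k ∈ Finset.Icc 1 n,
      ‖∫ s in Set.Icc (eF t n (2 * k)) (eF t n (2 * k - 1)), (ψ s - ψ (s + δ))‖ ≤ ε' * δ := by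
    intro k _
    have hle : eF t n (2 * (k:ℝ)) ≤ eF t n (2 * k - 1) := eF_le ht hn (by linarith)
    have hgap : eF t n (2 * (k:ℝ) - 1) - eF t n (2 * k) = δ := by
      have : eF t n (2 * (k:ℝ)) + δ = eF t n (2 * k - 1) := by
        rw [hδdef]; exact eF_add hn _
      linarith
    refine le_trans (MeasureTheory.norm_setIntegral_le_of_norm_le_const (C := ε')
      measure_Icc_lt_top (fun x _ => ?_)) ?_
    · have hd : dist x (x + δ) < δ₀ := by
        rw [Real.dist_eq, abs_of_nonpos (by linarith)]
        linarith
      have := hδ₀' hd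
      rw [dist_eq_norm] at this
      exact this.le
    · rw [Real.volume_real_Icc_of_le hle, hgap]
  rw [dist_zero_right, hIeq]
  calc ‖∑ k ∈ Finset.Icc 1 n,
        ((∫ s : ℝ, (Set.Icc (eF t n (2 * k)) (eF t n (2 * k - 1))).indicator ψ s) -
          ∫ s : ℝ, (Set.Icc (eF t n (2 * k - 1)) (eF t n (2 * k - 2))).indicator ψ s)‖
      = ‖∑ k ∈ Finset.Icc 1 n,
          ∫ s in Set.Icc (eF t n (2 * k)) (eF t n (2 * k - 1)), (ψ s - ψ (s + δ))‖ := by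
        congr 1
        exact Finset.sum_congr rfl fun k _ => hdiff k
    _ ≤ ∑ k ∈ Finset.Icc 1 n,
          ‖∫ s in Set.Icc (eF t n (2 * k)) (eF t n (2 * k - 1)), (ψ s - ψ (s + δ))‖ :=
        norm_sum_le _ _
    _ ≤ ∑ _k ∈ Finset.Icc 1 n, ε' * δ := Finset.sum_le_sum hbnd
    _ = n * (ε' * δ) := by
        rw [Finset.sum_const, Nat.card_Icc]
        simp
    _ = ε' * (t / 4) := by
        rw [hδdef]
        field_simp
    _ < ε := by
        rw [hε'def, div_mul_eq_mul_div, div_lt_iff₀ hden]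
        nlinarith

local notation "⟪" x ", " y "⟫" => @inner ℂ _ _ x y

lemma inner_eq (ht : 0 < t) {F : Lp ℂ 2 (volume : Measure ℝ)} {f : ℝ → ℂ}
    (hf : ⇑F =ᵐ[(volume : Measure ℝ)] f) (n : ℕ) :
    ⟪F, (phi_memℒp ht n).toLp (phiFL t n)⟫ =
      ∫ s : ℝ, (starRingEnd ℂ) (f s) * phiFL t n s := by
  rw [MeasureTheory.L2.inner_def]
  refine integral_congr_ae ?_
  filter_upwards [hf, MemLp.coeFn_toLp (phi_memℒp ht n)] with s h1 h2
  rw [RCLike.inner_apply, h1, h2, mul_comm]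

lemma norm_Phi_sq (ht : 0 < t) (hn : 1 ≤ n) :
    ‖(phi_memℒp ht n).toLp (phiFL t n)‖ ^ 2 = (1 - Real.exp (-t)) / 2 := by
  have h1 : ⟪(phi_memℒp ht n).toLp (phiFL t n), (phi_memℒp ht n).toLp (phiFL t n)⟫ =
      (((1 - Real.exp (-t)) / 2 : ℝ) : ℂ) := by
    have h0 : (∫ s : ℝ, (starRingEnd ℂ) (phiFL t n s) * phiFL t n s)
        = ((∫ s : ℝ, ‖phiFL t n s‖ ^ 2 : ℝ) : ℂ) := by
      refine Eq.trans (integral_congr_ae (ae_of_all _ fun s => ?_)) integral_ofReal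
      show (starRingEnd ℂ) (phiFL t n s) * phiFL t n s = _
      rw [RCLike.conj_mul (phiFL t n s)]
      norm_cast
    rw [inner_eq ht (MemLp.coeFn_toLp (phi_memℒp ht n)) n, h0, part_i ht hn]
  have h2 := @inner_self_eq_norm_sq_to_K ℂ _ _ _ _ ((phi_memℒp ht n).toLp (phiFL t n))
  rw [h1] at h2
  have h3 : ((‖(phi_memℒp ht n).toLp (phiFL t n)‖ ^ 2 : ℝ) : ℂ) =
      (((1 - Real.exp (-t)) / 2 : ℝ) : ℂ) := by rw [Complex.ofReal_pow]; exact h2.symm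
  exact_mod_cast h3

lemma phi_c_pos (ht : 0 < t) : 0 < (1 - Real.exp (-t)) / 2 := by
  have := Real.exp_lt_one_iff.2 (by linarith : -t < 0)
  linarith

lemma norm_Phi_le_one (ht : 0 < t) (n : ℕ) :
    ‖(phi_memℒp ht n).toLp (phiFL t n)‖ ≤ 1 := by
  rcases Nat.eq_zero_or_pos n with rfl | hn
  · rw [Lp.norm_toLp]
    have : phiFL t 0 = fun _ => (0 : ℂ) := by
      funext s; simp [phiFL]
    rw [this]
    simp [eLpNorm_zero']
  · have h := norm_Phi_sq ht hn
    have hpos := norm_nonneg ((phi_memℒp ht n).toLp (phiFL t n))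
    have hexp := Real.exp_pos (-t)
    nlinarith

lemma part_ii (ht : 0 < t) (f : Lp ℂ 2 (volume : Measure ℝ)) :
    Tendsto (fun n : ℕ => ∫ s : ℝ, (starRingEnd ℂ) (f s) * phiFL t n s) atTop (nhds 0) := by
  rw [Metric.tendsto_atTop]
  intro ε hε
  obtain ⟨g, hgs, hgl, hgc, hgm⟩ :=
    (Lp.memLp f).exists_hasCompactSupport_eLpNorm_sub_le (by norm_num : (2:ℝ≥0∞) ≠ ∞)
      (ε := ENNReal.ofReal (ε / 4)) (ENNReal.ofReal_pos.2 (by linarith)).ne'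
  obtain ⟨N₁, hN₁⟩ := Metric.tendsto_atTop.1 (tendsto_cont ht hgc hgs) (ε / 2) (by linarith)
  refine ⟨N₁, fun n hn' => ?_⟩
  set G : Lp ℂ 2 (volume : Measure ℝ) := hgm.toLp g with hGdef
  set Φ : Lp ℂ 2 (volume : Measure ℝ) := (phi_memℒp ht n).toLp (phiFL t n) with hΦdef
  have hXnorm : ‖f - G‖ ≤ ε / 4 := by
    rw [Lp.norm_def]
    have heq : eLpNorm (⇑(f - G)) 2 (volume : Measure ℝ) =
        eLpNorm (⇑f - g) 2 (volume : Measure ℝ) := by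
      refine eLpNorm_congr_ae ?_
      filter_upwards [Lp.coeFn_sub f G, hgm.coeFn_toLp] with s h1 h2
      rw [h1]
      simp only [Pi.sub_apply]
      rw [h2]
    rw [heq]
    exact ENNReal.toReal_le_of_le_ofReal (by linarith) hgl
  have hsplit : ⟪f, Φ⟫ = ⟪f - G, Φ⟫ + ⟪G, Φ⟫ := by
    rw [inner_sub_left]; ring
  have hterm1 : ‖⟪f - G, Φ⟫‖ ≤ ε / 4 := by
    refine (norm_inner_le_norm _ _).trans ?_
    calc ‖f - G‖ * ‖Φ‖ ≤ (ε / 4) * 1 :=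
          mul_le_mul hXnorm (norm_Phi_le_one ht n) (norm_nonneg _) (by linarith)
      _ = ε / 4 := by ring
  have hterm2 : ‖⟪G, Φ⟫‖ < ε / 2 := by
    rw [hΦdef, inner_eq ht hgm.coeFn_toLp n]
    have := hN₁ n hn'
    rwa [dist_zero_right] at this
  rw [dist_zero_right, ← inner_eq ht (Filter.EventuallyEq.refl _ _) n, hsplit]
  calc ‖⟪f - G, Φ⟫ + ⟪G, Φ⟫‖ ≤ ‖⟪f - G, Φ⟫‖ + ‖⟪G, Φ⟫‖ := norm_add_le _ _
    _ < ε / 4 + ε / 2 := by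
        have := hterm1; have := hterm2; linarith
    _ < ε := by linarith

lemma part_iii (ht : 0 < t) :
    ¬ ∃ g : ℝ → ℂ, MemLp g 2 (volume : Measure ℝ) ∧
        Tendsto (fun n : ℕ => eLpNorm (fun s => phiFL t n s - g s) 2 volume) atTop (nhds 0) := by
  rintro ⟨g, hgm, htend⟩
  set G : Lp ℂ 2 (volume : Measure ℝ) := hgm.toLp g with hGdef
  have h1 : Tendsto (fun n : ℕ => (phi_memℒp ht n).toLp (phiFL t n)) atTop (nhds G) := by
    rw [tendsto_iff_dist_tendsto_zero]
    have hdist : ∀ n : ℕ, dist ((phi_memℒp ht n).toLp (phiFL t n)) G =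
        (eLpNorm (fun s => phiFL t n s - g s) 2 volume).toReal := by
      intro n
      rw [Lp.dist_def]
      congr 1
      refine eLpNorm_congr_ae ?_
      filter_upwards [MemLp.coeFn_toLp (phi_memℒp ht n), hgm.coeFn_toLp] with s hs2 hs3
      simp only [Pi.sub_apply]
      rw [hs2, hs3]
    refine Tendsto.congr (fun n => (hdist n).symm) ?_
    have h0 := (ENNReal.tendsto_toReal (by simp)).comp htend
    exact h0
  have h2 : Tendsto (fun n : ℕ => ⟪G, (phi_memℒp ht n).toLp (phiFL t n)⟫) atTop
      (nhds ⟪G, G⟫) := tendsto_const_nhds.inner h1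
  have h3 : Tendsto (fun n : ℕ => ⟪G, (phi_memℒp ht n).toLp (phiFL t n)⟫) atTop (nhds 0) := by
    refine Tendsto.congr (fun n => ?_) (part_ii ht G)
    exact (inner_eq ht (Filter.EventuallyEq.refl _ _) n).symm
  have hGG : ⟪G, G⟫ = (0 : ℂ) := tendsto_nhds_unique h2 h3
  have hG0 : G = 0 := inner_self_eq_zero.1 hGG
  rw [hG0] at h1
  have h4 : Tendsto (fun n : ℕ => ‖(phi_memℒp ht n).toLp (phiFL t n)‖ ^ 2) atTop (nhds 0) := by
    have h := (continuous_norm.tendsto (0 : Lp ℂ 2 (volume : Measure ℝ))).comp h1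
    rw [norm_zero] at h
    simpa using h.pow 2
  have h5 : Tendsto (fun n : ℕ => ‖(phi_memℒp ht n).toLp (phiFL t n)‖ ^ 2) atTop
      (nhds ((1 - Real.exp (-t)) / 2)) := by
    refine Tendsto.congr' ?_ tendsto_const_nhds
    filter_upwards [eventually_ge_atTop 1] with n hn
    exact (norm_Phi_sq ht hn).symm
  have hzero := tendsto_nhds_unique h5 h4
  have hpos := phi_c_pos ht
  linarith

end FLaux


/-- For fixed `t > 0`: (i) `‖φ_{n,t}‖² = (1 − e^{−t})/2` for every `n ≥ 1`;
(ii) `φ_{n,t} → 0` weakly in `L²(ℝ)`; hence (iii) `(φ_{n,t})ₙ` does not converge in the norm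
of `L²(ℝ)`. -/
theorem friedrichs_lee_no_norm_convergence (t : ℝ) (ht : 0 < t) :
    (∀ n : ℕ, 1 ≤ n → ∫ s : ℝ, ‖phiFL t n s‖ ^ 2 = (1 - Real.exp (-t)) / 2) ∧
    (∀ f : Lp ℂ 2 (volume : Measure ℝ),
      Tendsto (fun n : ℕ => ∫ s : ℝ, (starRingEnd ℂ) (f s) * phiFL t n s) atTop (nhds 0)) ∧
    ¬ ∃ g : ℝ → ℂ, MemLp g 2 (volume : Measure ℝ) ∧
        Tendsto (fun n : ℕ => eLpNorm (fun s => phiFL t n s - g s) 2 volume) atTop (nhds 0) := by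
  exact ⟨fun n hn => FLaux.part_i ht hn, fun f => FLaux.part_ii ht f, FLaux.part_iii ht⟩
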